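/- For density matrices ρ, σ and M > 0, the measurement operator F_σ = (M^{-1}ρ + σ)^{-1/2} σ (M^{-1}ρ + σ)^{-1/2} satisfies tr(σ F_σ) ≥ (1 + M^{−1})^{−1}, i.e., the type II success probability is at least M/(M+1). -/

import Mathlib

open Matrix BigOperators ComplexOrder Kronecker

variable {n : Type*} [Fintype n] [DecidableEq n]

/-- Apply a real function to a matrix via its spectral decomposition (0 if not Hermitian). -/
noncomputable def mFun (f : ℝ → ℝ) (A : Matrix n n ℂ) : Matrix n n ℂ :=
  if hA : A.IsHermitian then
    (hA.eigenvectorUnitary : Matrix n n ℂ) *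
      Matrix.diagonal (fun i => (f (hA.eigenvalues i) : ℂ)) *
      star (hA.eigenvectorUnitary : Matrix n n ℂ)
  else 0

/-- Fractional power of the Moore–Penrose pseudoinverse type: `x ↦ x^r` on the support. -/
noncomputable def mpow (r : ℝ) (A : Matrix n n ℂ) : Matrix n n ℂ :=
  mFun (fun x => if x = 0 then 0 else x ^ r) A

/-- Projection onto nonnegative eigenspaces of a Hermitian matrix. -/
noncomputable def projNonneg (A : Matrix n n ℂ) : Matrix n n ℂ :=
  mFun (fun x => if 0 ≤ x then 1 else 0) A

/-- Projection onto strictly positive eigenspaces of a Hermitian matrix. -/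
noncomputable def projPos (A : Matrix n n ℂ) : Matrix n n ℂ :=
  mFun (fun x => if 0 < x then 1 else 0) A

/-- supp ρ ⊆ supp σ, phrased via kernels (for PSD matrices). -/
def suppLE (ρ σ : Matrix n n ℂ) : Prop :=
  ∀ v : n → ℂ, σ.mulVec v = 0 → ρ.mulVec v = 0

/-- Exponential of the collision relative entropy, exp D₂(ρ‖σ) = tr[(σ^{-1/4} ρ σ^{-1/4})²]. -/
noncomputable def expD2 (ρ σ : Matrix n n ℂ) : ℝ :=
  (((mpow (-(4:ℝ)⁻¹) σ) * ρ * (mpow (-(4:ℝ)⁻¹) σ)) ^ 2).trace.re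

/-- Collision relative entropy (base 2). -/
noncomputable def D2 (ρ σ : Matrix n n ℂ) : ℝ := Real.logb 2 (expD2 ρ σ)

/-- Information spectrum relative entropy. -/
noncomputable def Ds (ε : ℝ) (ρ σ : Matrix n n ℂ) : ℝ :=
  sSup {R : ℝ | Complex.re (Matrix.trace (ρ * projNonneg ((2:ℝ)^R • σ - ρ))) ≤ ε}

/-- Density matrix. -/
def IsDensity (ρ : Matrix n n ℂ) : Prop := ρ.PosSemidef ∧ ρ.trace = 1

lemma mFun_eq {A : Matrix n n ℂ} (hA : A.IsHermitian) (f : ℝ → ℝ) :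
    mFun f A = (hA.eigenvectorUnitary : Matrix n n ℂ) *
      Matrix.diagonal (fun i => (f (hA.eigenvalues i) : ℂ)) *
      star (hA.eigenvectorUnitary : Matrix n n ℂ) := dif_pos hA

lemma mFun_mul {A : Matrix n n ℂ} (hA : A.IsHermitian) (f g : ℝ → ℝ) :
    mFun f A * mFun g A = mFun (fun x => f x * g x) A := by
  rw [mFun_eq hA, mFun_eq hA, mFun_eq hA]
  have h1 : (star (hA.eigenvectorUnitary : Matrix n n ℂ)) * (hA.eigenvectorUnitary : Matrix n n ℂ) = 1 := by
    exact (Matrix.mem_unitaryGroup_iff').mp (hA.eigenvectorUnitary).2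
  calc _ = (hA.eigenvectorUnitary : Matrix n n ℂ) *
      Matrix.diagonal (fun i => (f (hA.eigenvalues i) : ℂ)) *
      ((star (hA.eigenvectorUnitary : Matrix n n ℂ)) * (hA.eigenvectorUnitary : Matrix n n ℂ)) *
      Matrix.diagonal (fun i => (g (hA.eigenvalues i) : ℂ)) *
      star (hA.eigenvectorUnitary : Matrix n n ℂ) := by
        simp only [mul_assoc]
    _ = _ := by
        rw [h1, mul_one]
        simp only [mul_assoc, diagonal_mul_diagonal]
        push_cast
        ring_nf

lemma mFun_congr {A : Matrix n n ℂ} (hA : A.IsHermitian) {f g : ℝ → ℝ}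
    (h : ∀ i, f (hA.eigenvalues i) = g (hA.eigenvalues i)) : mFun f A = mFun g A := by
  rw [mFun_eq hA, mFun_eq hA]
  congr 2
  exact congrArg _ (funext fun i => by rw [h i])

lemma mFun_id {A : Matrix n n ℂ} (hA : A.IsHermitian) : mFun (fun x => x) A = A := by
  rw [mFun_eq hA]
  exact (hA.spectral_theorem).symm

lemma mFun_zero {A : Matrix n n ℂ} (hA : A.IsHermitian) : mFun (fun _ => 0) A = 0 := by
  rw [mFun_eq hA]; simp

lemma mFun_one {A : Matrix n n ℂ} (hA : A.IsHermitian) : mFun (fun _ => 1) A = 1 := by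
  rw [mFun_eq hA]
  simp only [Complex.ofReal_one, diagonal_one, mul_one]
  exact (Matrix.mem_unitaryGroup_iff).mp (hA.eigenvectorUnitary).2

lemma mFun_add {A : Matrix n n ℂ} (hA : A.IsHermitian) (f g : ℝ → ℝ) :
    mFun f A + mFun g A = mFun (fun x => f x + g x) A := by
  simp only [mFun_eq hA]
  rw [← add_mul, ← mul_add, diagonal_add]
  push_cast
  ring_nf

lemma mFun_isHermitian {A : Matrix n n ℂ} (hA : A.IsHermitian) (f : ℝ → ℝ) :
    (mFun f A).IsHermitian := by
  rw [mFun_eq hA]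
  have : (Matrix.diagonal (fun i => (f (hA.eigenvalues i) : ℂ))).IsHermitian := by
    apply isHermitian_diagonal_of_self_adjoint
    funext i
    simp [Complex.star_def]
  have h2 := Matrix.isHermitian_mul_mul_conjTranspose (hA.eigenvectorUnitary : Matrix n n ℂ) this
  simpa [Matrix.star_eq_conjTranspose] using h2

lemma trace_re_nonneg_sq {D : Matrix n n ℂ} (hD : D.IsHermitian) : 0 ≤ (D * D).trace.re := by
  have h : (Dᴴ * D).PosSemidef := Matrix.posSemidef_conjTranspose_mul_self D
  have h2 : 0 ≤ (Dᴴ * D).trace := by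
    rw [Matrix.trace]
    apply Finset.sum_nonneg
    intro i _
    have := h.dotProduct_mulVec_nonneg (Pi.single i 1)
    simpa [Matrix.mulVec_single, dotProduct, Pi.single_apply, Matrix.diag] using this
  rw [hD.eq] at h2
  exact (Complex.le_def.mp h2).1

/-- the type II success probability is at least (1 + M⁻¹)⁻¹. -/
theorem type_two_success_bound (ρ σ : Matrix n n ℂ)
    (hρ : IsDensity ρ) (hσ : IsDensity σ) (M : ℝ) (hM : 0 < M) :
    (1 + M⁻¹)⁻¹ ≤ (σ * (mpow (-(2:ℝ)⁻¹) (M⁻¹ • ρ + σ) * σ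
        * mpow (-(2:ℝ)⁻¹) (M⁻¹ • ρ + σ))).trace.re := by
  obtain ⟨hρP, hρT⟩ := hρ
  obtain ⟨hσP, hσT⟩ := hσ
  have hMρ : (M⁻¹ • ρ : Matrix n n ℂ).PosSemidef := by
    refine ⟨?_, fun x => ?_⟩
    · show (M⁻¹ • ρ)ᴴ = M⁻¹ • ρ
      rw [Matrix.conjTranspose_smul, hρP.1.eq, star_trivial]
    · exact (hρP.smul (inv_nonneg.mpr hM.le)).2 x
  set A := M⁻¹ • ρ + σ with hAdef
  clear_value A
  have hAP : A.PosSemidef := by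
    rw [hAdef]
    refine ⟨hMρ.1.add hσP.1, fun x => ?_⟩
    exact (hMρ.add hσP).2 x
  have hA := hAP.1
  have hev : ∀ i, 0 ≤ hA.eigenvalues i := hAP.eigenvalues_nonneg
  set B4 := mpow (-(4:ℝ)⁻¹) A with hB4
  set S := mpow ((2:ℝ)⁻¹) A with hS
  set C := B4 * σ * B4 with hC
  clear_value B4 S C
  have hB4H : B4.IsHermitian := by rw [hB4]; exact mFun_isHermitian hA _
  have hSH : S.IsHermitian := by rw [hS]; exact mFun_isHermitian hA _
  have hBB : mpow (-(2:ℝ)⁻¹) A = B4 * B4 := by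
    rw [hB4]
    simp only [mpow]
    rw [mFun_mul hA]
    apply mFun_congr hA
    intro i
    by_cases h : hA.eigenvalues i = 0
    · simp [h]
    · have hpos : 0 < hA.eigenvalues i := lt_of_le_of_ne (hev i) (Ne.symm h)
      simp only [h, if_false]
      rw [← Real.rpow_add hpos]
      norm_num
  set P := mFun (fun x => if x = 0 then (0:ℝ) else 1) A with hPdef
  set Q := mFun (fun x => if x = 0 then (1:ℝ) else 0) A with hQdef
  clear_value P Q
  have hPQ : P + Q = 1 := by
    rw [hPdef, hQdef, mFun_add hA, ← mFun_one hA]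
    apply mFun_congr hA
    intro i
    by_cases h : hA.eigenvalues i = 0 <;> simp [h]
  have hAQ : A * Q = 0 := by
    nth_rewrite 1 [← mFun_id hA]
    rw [hQdef, mFun_mul hA, ← mFun_zero hA]
    apply mFun_congr hA
    intro i
    by_cases h : hA.eigenvalues i = 0 <;> simp [h]
  have hσQ : σ * Q = 0 := by
    ext i j
    set v := fun k => Q k j with hvdef
    have hv : A.mulVec v = 0 := by
      funext i'
      have h := congrFun (congrFun hAQ i') j
      simpa [Matrix.mul_apply, Matrix.mulVec, dotProduct, hvdef] using h
    have h1 : star v ⬝ᵥ σ.mulVec v = 0 := by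
      have hsum : star v ⬝ᵥ (M⁻¹ • ρ).mulVec v + star v ⬝ᵥ σ.mulVec v = 0 := by
        rw [← dotProduct_add, ← Matrix.add_mulVec, ← hAdef, hv, dotProduct_zero]
      have ha := hMρ.dotProduct_mulVec_nonneg v
      have hb := hσP.dotProduct_mulVec_nonneg v
      have hba : star v ⬝ᵥ σ.mulVec v = -(star v ⬝ᵥ (M⁻¹ • ρ).mulVec v) :=
        eq_neg_of_add_eq_zero_right hsum
      refine le_antisymm ?_ hb
      rw [hba]
      exact neg_nonpos.mpr ha
    have h2 : σ.mulVec v = 0 := (hσP.dotProduct_mulVec_zero_iff _).mp h1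
    have h3 := congrFun h2 i
    simpa [Matrix.mul_apply, Matrix.mulVec, dotProduct, hvdef] using h3
  have hσP' : σ * P = σ := by
    have hp : P = 1 - Q := by rw [← hPQ]; abel
    rw [hp, mul_sub, mul_one, hσQ, sub_zero]
  have hSS : S * S = A := by
    rw [hS]
    simp only [mpow]
    rw [mFun_mul hA]
    nth_rewrite 2 [← mFun_id hA]
    apply mFun_congr hA
    intro i
    by_cases h : hA.eigenvalues i = 0
    · simp [h]
    · have hpos : 0 < hA.eigenvalues i := lt_of_le_of_ne (hev i) (Ne.symm h)
      simp only [h, if_false]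
      rw [← Real.rpow_add hpos]
      norm_num
  have hB4SB4 : B4 * S * B4 = P := by
    rw [hB4, hS, hPdef]
    simp only [mpow]
    rw [mFun_mul hA, mFun_mul hA]
    apply mFun_congr hA
    intro i
    by_cases h : hA.eigenvalues i = 0
    · simp [h]
    · have hpos : 0 < hA.eigenvalues i := lt_of_le_of_ne (hev i) (Ne.symm h)
      simp only [h, if_false]
      rw [← Real.rpow_add hpos, ← Real.rpow_add hpos]
      norm_num
  have htrA : A.trace = ((1 + M⁻¹ : ℝ) : ℂ) := by
    rw [hAdef, Matrix.trace_add, Matrix.trace_smul, hρT, hσT]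
    simp only [Complex.real_smul]
    push_cast
    ring
  have htrCS : (C * S).trace = 1 := by
    have e1 : C * S = B4 * (σ * (B4 * S)) := by rw [hC]; simp only [mul_assoc]
    rw [e1, Matrix.trace_mul_comm]
    have e2 : σ * (B4 * S) * B4 = σ * (B4 * S * B4) := by simp only [mul_assoc]
    rw [e2, hB4SB4, hσP', hσT]
  have htrSC : (S * C).trace = 1 := by rw [Matrix.trace_mul_comm, htrCS]
  have htarget : (σ * (mpow (-(2:ℝ)⁻¹) A * σ * mpow (-(2:ℝ)⁻¹) A)).trace = (C * C).trace := by
    rw [hBB]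
    have e1 : σ * (B4 * B4 * σ * (B4 * B4)) = σ * (B4 * B4 * σ * B4) * B4 := by
      simp only [mul_assoc]
    rw [e1, Matrix.trace_mul_comm]
    congr 1
    rw [hC]
    simp only [mul_assoc]
  have hCH : C.IsHermitian := by
    show Cᴴ = C
    rw [hC]
    simp only [Matrix.conjTranspose_mul, hB4H.eq, hσP.1.eq, mul_assoc]
  set t := (1 + M⁻¹)⁻¹ with ht
  set D := C - (t:ℂ) • S with hDdef
  clear_value D
  have hDH : D.IsHermitian := by
    show Dᴴ = D
    rw [hDdef, Matrix.conjTranspose_sub, Matrix.conjTranspose_smul, hCH.eq, hSH.eq,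
      Complex.star_def, Complex.conj_ofReal]
  have hkey := trace_re_nonneg_sq hDH
  have hexp : D * D = C * C - (t:ℂ) • (C * S) - (t:ℂ) • (S * C) + ((t:ℂ)*(t:ℂ)) • (S * S) := by
    rw [hDdef]
    simp only [sub_mul, mul_sub, Matrix.smul_mul, Matrix.mul_smul, smul_smul]
    abel
  have h1M : (0:ℝ) < 1 + M⁻¹ := by positivity
  have htr : (D * D).trace.re = (C * C).trace.re - 2 * t + t * t * (1 + M⁻¹) := by
    rw [hexp, Matrix.trace_add, Matrix.trace_sub, Matrix.trace_sub, Matrix.trace_smul,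
      Matrix.trace_smul, Matrix.trace_smul, htrCS, htrSC, hSS, htrA]
    simp [Complex.sub_re, Complex.add_re, Complex.mul_re]
    ring
  rw [htr] at hkey
  have hre : (σ * (mpow (-(2:ℝ)⁻¹) A * σ * mpow (-(2:ℝ)⁻¹) A)).trace.re = (C * C).trace.re := by
    rw [htarget]
  rw [hre]
  have htt : t * t * (1 + M⁻¹) = t := by
    rw [ht]; field_simp
  linarith
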